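/- arXiv:2202.10066 — 2 statements merged into one kernel-verified Lean document; each statement's English description precedes it below -/
import Mathlib

section
/- Every matrix Δ in the cone C(r) satisfies ‖Δ‖_* ≤ 4·√(2r)·‖Δ‖_F. -/
open MeasureTheory ProbabilityTheory Matrix

/-- The (unordered) singular values of a real `m × n` matrix, indexed by `Fin n`:
the square roots of the eigenvalues of `Aᵀ * A`. -/
noncomputable def singVals {m n : ℕ} (A : Matrix (Fin m) (Fin n) ℝ) : Fin n → ℝ :=
  fun i => Real.sqrt ((show (Aᵀ * A).IsHermitian by
    simpa [Matrix.conjTranspose_eq_transpose_of_trivial] using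
      Matrix.isHermitian_conjTranspose_mul_self A).eigenvalues i)

theorem Matrix.isHermitian_transpose_mul_self {m n : ℕ} (A : Matrix (Fin m) (Fin n) ℝ) :
    (Aᵀ * A).IsHermitian := by
  simpa [Matrix.conjTranspose_eq_transpose_of_trivial] using
    Matrix.isHermitian_conjTranspose_mul_self A

/-- The nuclear (trace) norm: the sum of the singular values. -/
noncomputable def nucNorm {m n : ℕ} (A : Matrix (Fin m) (Fin n) ℝ) : ℝ := ∑ i, singVals A i

/-- The Frobenius norm. -/
noncomputable def frobNorm {m n : ℕ} (A : Matrix (Fin m) (Fin n) ℝ) : ℝ :=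
  Real.sqrt (∑ i, ∑ j, (A i j) ^ 2)

/-- The operator norm: the largest singular value. -/
noncomputable def opNorm {m n : ℕ} (A : Matrix (Fin m) (Fin n) ℝ) : ℝ := ⨆ i, singVals A i

/-- `Π(Δ) = (I - U Uᵀ) Δ (I - V Vᵀ)`. -/
def projPerp {d T r : ℕ} (U : Matrix (Fin d) (Fin r) ℝ) (V : Matrix (Fin T) (Fin r) ℝ)
    (Δ : Matrix (Fin d) (Fin T) ℝ) : Matrix (Fin d) (Fin T) ℝ :=
  (1 - U * Uᵀ) * Δ * (1 - V * Vᵀ)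

/-- The cone `C(r) = {Δ : ‖Π(Δ)‖_* ≤ 3 ‖Δ - Π(Δ)‖_*}`. -/
noncomputable def coneC {d T r : ℕ} (U : Matrix (Fin d) (Fin r) ℝ)
    (V : Matrix (Fin T) (Fin r) ℝ) : Set (Matrix (Fin d) (Fin T) ℝ) :=
  {Δ | nucNorm (projPerp U V Δ) ≤ 3 * nucNorm (Δ - projPerp U V Δ)}

/-- The block-diagonal quadratic form `∑ t, Δ_tᵀ S_t Δ_t`. -/
noncomputable def quadSum {d T : ℕ} (S : Fin T → Matrix (Fin d) (Fin d) ℝ)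
    (Δ : Matrix (Fin d) (Fin T) ℝ) : ℝ :=
  ∑ t, (fun i => Δ i t) ⬝ᵥ (S t).mulVec (fun i => Δ i t)

/-- The restricted strong convexity condition for the block-diagonal matrix with blocks `S t`,
on the cone `cone`, with constant `κ`. -/
def RSC {d T : ℕ} (S : Fin T → Matrix (Fin d) (Fin d) ℝ)
    (cone : Set (Matrix (Fin d) (Fin T) ℝ)) (κ : ℝ) : Prop :=
  ∀ Δ ∈ cone, 2 * κ * (frobNorm Δ) ^ 2 ≤ quadSum S Δ

/-- The cone-restricted operator norm of the block-diagonal matrix with blocks `S t`. -/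
noncomputable def coneOpNorm {d T : ℕ} (S : Fin T → Matrix (Fin d) (Fin d) ℝ)
    (cone : Set (Matrix (Fin d) (Fin T) ℝ)) : ℝ :=
  sSup {c | ∃ Δ ∈ cone, frobNorm Δ = 1 ∧ c = |quadSum S Δ|}


lemma frob_sq {m n : ℕ} (A : Matrix (Fin m) (Fin n) ℝ) :
    frobNorm A ^ 2 = (Aᵀ * A).trace := by
  rw [frobNorm, Real.sq_sqrt (by positivity)]
  rw [Matrix.trace, Finset.sum_comm]
  simp [Matrix.diag, Matrix.mul_apply, sq]

lemma frob_nonneg {m n : ℕ} (A : Matrix (Fin m) (Fin n) ℝ) : 0 ≤ frobNorm A :=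
  Real.sqrt_nonneg _

lemma singVals_nonneg {m n : ℕ} (A : Matrix (Fin m) (Fin n) ℝ) (i : Fin n) :
    0 ≤ singVals A i := Real.sqrt_nonneg _

lemma nucNorm_nonneg {m n : ℕ} (A : Matrix (Fin m) (Fin n) ℝ) : 0 ≤ nucNorm A :=
  Finset.sum_nonneg fun i _ => singVals_nonneg A i

lemma unit_mul_tr {n : ℕ} (U : Matrix.unitaryGroup (Fin n) ℝ) :
    (U : Matrix (Fin n) (Fin n) ℝ) * (U : Matrix (Fin n) (Fin n) ℝ)ᵀ = 1 := by
  have := Matrix.mem_unitaryGroup_iff.mp U.2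
  rwa [star_eq_conjTranspose, conjTranspose_eq_transpose_of_trivial] at this

lemma tr_mul_unit {n : ℕ} (U : Matrix.unitaryGroup (Fin n) ℝ) :
    (U : Matrix (Fin n) (Fin n) ℝ)ᵀ * (U : Matrix (Fin n) (Fin n) ℝ) = 1 := by
  have := Matrix.mem_unitaryGroup_iff'.mp U.2
  rwa [star_eq_conjTranspose, conjTranspose_eq_transpose_of_trivial] at this

lemma diag_eq {m n : ℕ} (A : Matrix (Fin m) (Fin n) ℝ) :
    ((Matrix.isHermitian_transpose_mul_self A).eigenvectorUnitary : Matrix (Fin n) (Fin n) ℝ)ᵀ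
      * (Aᵀ * A) *
      ((Matrix.isHermitian_transpose_mul_self A).eigenvectorUnitary : Matrix (Fin n) (Fin n) ℝ)
      = diagonal ((Matrix.isHermitian_transpose_mul_self A).eigenvalues) := by
  simpa [star_eq_conjTranspose, Matrix.conjTranspose_eq_transpose_of_trivial, Matrix.mul_assoc,
    RCLike.ofReal_real_eq_id] using
    Matrix.IsHermitian.conjStarAlgAut_star_eigenvectorUnitary (Matrix.isHermitian_transpose_mul_self A)

lemma trace_eq_sum_eig {m n : ℕ} (A : Matrix (Fin m) (Fin n) ℝ) :
    (Aᵀ * A).trace = ∑ i, (Matrix.isHermitian_transpose_mul_self A).eigenvalues i := by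
  have key := congr_arg Matrix.trace (diag_eq A)
  rw [Matrix.trace_mul_cycle, ← Matrix.mul_assoc,
    unit_mul_tr ((Matrix.isHermitian_transpose_mul_self A).eigenvectorUnitary),
    Matrix.one_mul, Matrix.trace_diagonal] at key
  exact key

lemma psd_diag_nonneg {n : ℕ} {M : Matrix (Fin n) (Fin n) ℝ} (hM : M.PosSemidef)
    (i : Fin n) : 0 ≤ M i i := by
  exact hM.diag_nonneg

lemma dual_bound {m n : ℕ} (Y G : Matrix (Fin m) (Fin n) ℝ)
    (hG : (1 - Gᵀ * G).PosSemidef) : (Gᵀ * Y).trace ≤ nucNorm Y := by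
  classical
  set V : Matrix (Fin n) (Fin n) ℝ :=
    ((Matrix.isHermitian_transpose_mul_self Y).eigenvectorUnitary :
      Matrix (Fin n) (Fin n) ℝ) with hVdef
  have hVV : Vᵀ * V = 1 := tr_mul_unit _
  have hVVt : V * Vᵀ = 1 := unit_mul_tr _
  -- trace identity
  have e1 : (G * V)ᵀ * (Y * V) = Vᵀ * (Gᵀ * Y) * V := by
    rw [Matrix.transpose_mul]
    simp only [Matrix.mul_assoc]
  have e2 : (Vᵀ * (Gᵀ * Y) * V).trace = (Gᵀ * Y).trace := by
    rw [Matrix.trace_mul_cycle, ← Matrix.mul_assoc, hVVt, Matrix.one_mul]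
  have h1 : (Gᵀ * Y).trace = ∑ i, ∑ k, (G * V) k i * (Y * V) k i := by
    rw [← e2, ← e1]
    simp [Matrix.trace, Matrix.diag, Matrix.mul_apply, mul_comm]
  -- column norms of Y * V
  have hb : ∀ i, ∑ k, (Y * V) k i ^ 2 =
      (Matrix.isHermitian_transpose_mul_self Y).eigenvalues i := by
    intro i
    have e3 : (Y * V)ᵀ * (Y * V) =
        diagonal ((Matrix.isHermitian_transpose_mul_self Y).eigenvalues) := by
      rw [Matrix.transpose_mul]
      rw [show Vᵀ * Yᵀ * (Y * V) = Vᵀ * (Yᵀ * Y) * V by simp only [Matrix.mul_assoc]]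
      exact diag_eq Y
    have := congr_fun (congr_fun e3 i) i
    simpa [Matrix.mul_apply, sq, mul_comm] using this
  -- column norms of G * V are ≤ 1
  have ha : ∀ i, ∑ k, (G * V) k i ^ 2 ≤ 1 := by
    intro i
    have hpsd : (Vᵀ * (1 - Gᵀ * G) * V).PosSemidef := by
      have := hG.conjTranspose_mul_mul_same V
      rwa [Matrix.conjTranspose_eq_transpose_of_trivial] at this
    have e4 : Vᵀ * (1 - Gᵀ * G) * V = 1 - (G * V)ᵀ * (G * V) := by
      rw [Matrix.mul_sub, Matrix.sub_mul, Matrix.mul_one, hVV, Matrix.transpose_mul]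
      simp only [Matrix.mul_assoc]
    have h5 : 0 ≤ (1 - (G * V)ᵀ * (G * V) : Matrix (Fin n) (Fin n) ℝ) i i := by
      rw [← e4]; exact psd_diag_nonneg hpsd i
    have h6 : ((G * V)ᵀ * (G * V)) i i = ∑ k, (G * V) k i ^ 2 := by
      simp [Matrix.mul_apply, sq, mul_comm]
    simp only [Matrix.sub_apply, Matrix.one_apply_eq, h6] at h5
    linarith
  rw [h1, nucNorm]
  refine Finset.sum_le_sum fun i _ => ?_
  have hCS := Finset.sum_mul_sq_le_sq_mul_sq Finset.univ
    (fun k => (G * V) k i) (fun k => (Y * V) k i)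
  have heig := (Matrix.isHermitian_transpose_mul_self Y).eigenvalues i
  have hbnn : (0:ℝ) ≤ ∑ k, (Y * V) k i ^ 2 := Finset.sum_nonneg fun k _ => sq_nonneg _
  calc ∑ k, (G * V) k i * (Y * V) k i
      ≤ |∑ k, (G * V) k i * (Y * V) k i| := le_abs_self _
    _ = Real.sqrt ((∑ k, (G * V) k i * (Y * V) k i) ^ 2) := (Real.sqrt_sq_eq_abs _).symm
    _ ≤ Real.sqrt ((∑ k, (G * V) k i ^ 2) * ∑ k, (Y * V) k i ^ 2) :=
        Real.sqrt_le_sqrt hCS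
    _ = Real.sqrt (∑ k, (G * V) k i ^ 2) * Real.sqrt (∑ k, (Y * V) k i ^ 2) :=
        Real.sqrt_mul (Finset.sum_nonneg fun k _ => sq_nonneg _) _
    _ ≤ 1 * Real.sqrt (∑ k, (Y * V) k i ^ 2) := by
        gcongr
        exact Real.sqrt_le_one.mpr (ha i)
    _ = singVals Y i := by rw [one_mul, hb i, singVals]

lemma dual_attained {m n : ℕ} (Y : Matrix (Fin m) (Fin n) ℝ) :
    ∃ G : Matrix (Fin m) (Fin n) ℝ, (1 - Gᵀ * G).PosSemidef ∧
      (Gᵀ * Y).trace = nucNorm Y := by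
  classical
  set hA := Matrix.isHermitian_transpose_mul_self Y with hhA
  set V : Matrix (Fin n) (Fin n) ℝ := (hA.eigenvectorUnitary : Matrix (Fin n) (Fin n) ℝ)
    with hVdef
  have hVV : Vᵀ * V = 1 := tr_mul_unit _
  have hVVt : V * Vᵀ = 1 := unit_mul_tr _
  have heig : ∀ i, 0 ≤ hA.eigenvalues i := fun i =>
    Matrix.eigenvalues_conjTranspose_mul_self_nonneg Y i
  set g : Fin n → ℝ := fun i => if hA.eigenvalues i = 0 then 0
    else (Real.sqrt (hA.eigenvalues i))⁻¹ with hg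
  refine ⟨Y * V * diagonal g * Vᵀ, ?_, ?_⟩
  · have hGt : (Y * V * diagonal g * Vᵀ)ᵀ = V * diagonal g * Vᵀ * Yᵀ := by
      simp [Matrix.transpose_mul, Matrix.diagonal_transpose, Matrix.mul_assoc]
    have hkey : (Y * V * diagonal g * Vᵀ)ᵀ * (Y * V * diagonal g * Vᵀ) =
        V * diagonal (fun i => g i * hA.eigenvalues i * g i) * Vᵀ := by
      rw [hGt]
      have : V * diagonal g * Vᵀ * Yᵀ * (Y * V * diagonal g * Vᵀ)
          = V * diagonal g * (Vᵀ * (Yᵀ * Y) * V) * diagonal g * Vᵀ := by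
        simp only [Matrix.mul_assoc]
      have hdd : diagonal g * diagonal hA.eigenvalues * diagonal g =
          diagonal (fun i => g i * hA.eigenvalues i * g i) := by
        rw [Matrix.diagonal_mul_diagonal, Matrix.diagonal_mul_diagonal]
      rw [this, diag_eq Y,
        show V * diagonal g * diagonal hA.eigenvalues * diagonal g * Vᵀ =
          V * (diagonal g * diagonal hA.eigenvalues * diagonal g) * Vᵀ from by
            simp only [Matrix.mul_assoc], hdd]
    have he : ∀ i, g i * hA.eigenvalues i * g i = if hA.eigenvalues i = 0 then 0 else 1 := by
      intro i
      by_cases h : hA.eigenvalues i = 0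
      · simp [hg, h]
      · have hpos : 0 < hA.eigenvalues i := lt_of_le_of_ne (heig i) (Ne.symm h)
        have hs : Real.sqrt (hA.eigenvalues i) ≠ 0 := by positivity
        have hh : Real.sqrt (hA.eigenvalues i) * Real.sqrt (hA.eigenvalues i)
            = hA.eigenvalues i := Real.mul_self_sqrt (heig i)
        simp only [hg, if_neg h]
        field_simp
        exact (Real.sq_sqrt (heig i)).symm
    have hone : (1 : Matrix (Fin n) (Fin n) ℝ) =
        V * diagonal (fun _ => (1:ℝ)) * Vᵀ := by
      simp [Matrix.diagonal_one, hVVt]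
    rw [hkey]
    have : (1 : Matrix (Fin n) (Fin n) ℝ) - V * diagonal (fun i => g i * hA.eigenvalues i * g i) * Vᵀ
        = V * diagonal (fun i => 1 - g i * hA.eigenvalues i * g i) * Vᵀ := by
      rw [hone]
      rw [← Matrix.sub_mul, ← Matrix.mul_sub, Matrix.diagonal_sub]
    rw [this]
    have hd : Matrix.PosSemidef (diagonal (fun i => 1 - g i * hA.eigenvalues i * g i)) := by
      apply Matrix.PosSemidef.diagonal
      intro i
      simp only [Pi.zero_apply]
      rw [he i]
      split <;> norm_num
    have := hd.mul_mul_conjTranspose_same V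
    simp only [Matrix.conjTranspose_eq_transpose_of_trivial] at this
    exact this
  · have hGt : (Y * V * diagonal g * Vᵀ)ᵀ = V * diagonal g * Vᵀ * Yᵀ := by
      simp [Matrix.transpose_mul, Matrix.diagonal_transpose, Matrix.mul_assoc]
    rw [hGt]
    have : V * diagonal g * Vᵀ * Yᵀ * Y = V * (diagonal g * (Vᵀ * (Yᵀ * Y))) := by
      simp only [Matrix.mul_assoc]
    rw [this, Matrix.trace_mul_comm]
    rw [show diagonal g * (Vᵀ * (Yᵀ * Y)) * V = diagonal g * (Vᵀ * (Yᵀ * Y) * V) by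
      simp only [Matrix.mul_assoc]]
    rw [diag_eq Y, Matrix.diagonal_mul_diagonal, Matrix.trace_diagonal]
    rw [nucNorm]
    refine Finset.sum_congr rfl fun i _ => ?_
    simp only [singVals, ← hhA]
    by_cases h : hA.eigenvalues i = 0
    · simp [hg, h]
    · have hpos : 0 < hA.eigenvalues i := lt_of_le_of_ne (heig i) (Ne.symm h)
      have hs : Real.sqrt (hA.eigenvalues i) ≠ 0 := by positivity
      have hh : Real.sqrt (hA.eigenvalues i) * Real.sqrt (hA.eigenvalues i)
          = hA.eigenvalues i := Real.mul_self_sqrt (heig i)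
      simp only [hg, if_neg h]
      field_simp
      exact (Real.sq_sqrt (heig i)).symm

lemma nucNorm_add_le {m n : ℕ} (A B : Matrix (Fin m) (Fin n) ℝ) :
    nucNorm (A + B) ≤ nucNorm A + nucNorm B := by
  obtain ⟨G, hG, hGt⟩ := dual_attained (A + B)
  rw [← hGt, Matrix.mul_add, Matrix.trace_add]
  exact add_le_add (dual_bound A G hG) (dual_bound B G hG)

lemma matrix_rank_add_le {m n : ℕ} (A B : Matrix (Fin m) (Fin n) ℝ) :
    (A + B).rank ≤ A.rank + B.rank := by
  simp only [Matrix.rank]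
  have h : LinearMap.range (A + B).mulVecLin ≤
      LinearMap.range A.mulVecLin ⊔ LinearMap.range B.mulVecLin := by
    rintro x ⟨v, rfl⟩
    rw [Matrix.mulVecLin_add]
    exact Submodule.add_mem_sup ⟨v, rfl⟩ ⟨v, rfl⟩
  calc Module.finrank ℝ (LinearMap.range (A + B).mulVecLin) ≤
      Module.finrank ℝ ↥(LinearMap.range A.mulVecLin ⊔ LinearMap.range B.mulVecLin) :=
        Submodule.finrank_mono h
    _ ≤ _ := Submodule.finrank_add_le_finrank_add_finrank _ _

lemma nucNorm_le_sqrt_rank_mul_frob {m n : ℕ} (A : Matrix (Fin m) (Fin n) ℝ) :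
    nucNorm A ≤ Real.sqrt A.rank * frobNorm A := by
  classical
  set hA := Matrix.isHermitian_transpose_mul_self A with hhA
  have heig : ∀ i, 0 ≤ hA.eigenvalues i := fun i =>
    Matrix.eigenvalues_conjTranspose_mul_self_nonneg A i
  set s : Finset (Fin n) := Finset.univ.filter (fun i => hA.eigenvalues i ≠ 0) with hs
  have hcard : s.card = A.rank := by
    have h1 : (Aᴴ * A).rank = A.rank := by
      rw [Matrix.conjTranspose_eq_transpose_of_trivial, Matrix.rank_transpose_mul_self]
    rw [← h1, Matrix.conjTranspose_eq_transpose_of_trivial, hA.rank_eq_card_non_zero_eigs, Fintype.card_subtype]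
  have hnuc : nucNorm A = ∑ i ∈ s, Real.sqrt (hA.eigenvalues i) := by
    rw [nucNorm, ← Finset.sum_filter_add_sum_filter_not Finset.univ
      (fun i => hA.eigenvalues i ≠ 0) (singVals A)]
    have : ∑ i ∈ Finset.univ.filter (fun i => ¬ hA.eigenvalues i ≠ 0), singVals A i = 0 := by
      apply Finset.sum_eq_zero
      intro i hi
      simp only [Finset.mem_filter, not_not] at hi
      simp [singVals, ← hhA, hi.2]
    rw [this, add_zero]
    exact Finset.sum_congr rfl fun i _ => by simp [singVals, ← hhA]
  have hsq : (∑ i ∈ s, Real.sqrt (hA.eigenvalues i)) ^ 2 ≤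
      (A.rank : ℝ) * ∑ i, hA.eigenvalues i := by
    calc (∑ i ∈ s, Real.sqrt (hA.eigenvalues i)) ^ 2
        ≤ s.card * ∑ i ∈ s, Real.sqrt (hA.eigenvalues i) ^ 2 :=
          sq_sum_le_card_mul_sum_sq
      _ = (A.rank : ℝ) * ∑ i ∈ s, hA.eigenvalues i := by
          rw [hcard]
          congr 1
          exact Finset.sum_congr rfl fun i _ => Real.sq_sqrt (heig i)
      _ ≤ (A.rank : ℝ) * ∑ i, hA.eigenvalues i := by
          apply mul_le_mul_of_nonneg_left _ (Nat.cast_nonneg _)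
          exact Finset.sum_le_sum_of_subset_of_nonneg (Finset.filter_subset _ _)
            (fun i _ _ => heig i)
  have hfrob : frobNorm A ^ 2 = ∑ i, hA.eigenvalues i := by
    rw [frob_sq]
    have := trace_eq_sum_eig A
    rw [← hhA] at this
    exact this
  have h1 : nucNorm A ^ 2 ≤ (Real.sqrt A.rank * frobNorm A) ^ 2 := by
    rw [hnuc, mul_pow, Real.sq_sqrt (Nat.cast_nonneg _), hfrob]
    exact hsq
  have h2 : 0 ≤ Real.sqrt A.rank * frobNorm A :=
    mul_nonneg (Real.sqrt_nonneg _) (frob_nonneg A)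
  nlinarith [nucNorm_nonneg A]

section main
variable {d T r : ℕ} (U : Matrix (Fin d) (Fin r) ℝ) (V : Matrix (Fin T) (Fin r) ℝ)

lemma frob_sub_proj_le (hU : Uᵀ * U = 1) (hV : Vᵀ * V = 1)
    (Δ : Matrix (Fin d) (Fin T) ℝ) :
    frobNorm (Δ - projPerp U V Δ) ≤ frobNorm Δ := by
  set P : Matrix (Fin d) (Fin d) ℝ := U * Uᵀ with hPdef
  set Q : Matrix (Fin T) (Fin T) ℝ := V * Vᵀ with hQdef
  have hP : ((1:Matrix (Fin d) (Fin d) ℝ) - P) * ((1:Matrix (Fin d) (Fin d) ℝ) - P)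
      = 1 - P := by
    have hPP : P * P = P := by
      rw [hPdef, Matrix.mul_assoc, ← Matrix.mul_assoc Uᵀ U Uᵀ, hU, Matrix.one_mul]
    rw [Matrix.mul_sub, Matrix.sub_mul, Matrix.sub_mul, Matrix.mul_one, Matrix.one_mul, hPP]
    abel_nf
    simp [hPdef]
  have hQ : ((1:Matrix (Fin T) (Fin T) ℝ) - Q) * ((1:Matrix (Fin T) (Fin T) ℝ) - Q)
      = 1 - Q := by
    have hQQ : Q * Q = Q := by
      rw [hQdef, Matrix.mul_assoc, ← Matrix.mul_assoc Vᵀ V Vᵀ, hV, Matrix.one_mul]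
    rw [Matrix.mul_sub, Matrix.sub_mul, Matrix.sub_mul, Matrix.mul_one, Matrix.one_mul, hQQ]
    abel_nf
    simp [hQdef]
  have hPt : ((1:Matrix (Fin d) (Fin d) ℝ) - P)ᵀ = 1 - P := by
    rw [Matrix.transpose_sub, Matrix.transpose_one, hPdef, Matrix.transpose_mul,
      Matrix.transpose_transpose]
  have hQt : ((1:Matrix (Fin T) (Fin T) ℝ) - Q)ᵀ = 1 - Q := by
    rw [Matrix.transpose_sub, Matrix.transpose_one, hQdef, Matrix.transpose_mul,
      Matrix.transpose_transpose]
  set N : Matrix (Fin d) (Fin T) ℝ := (1 - P) * Δ * (1 - Q) with hNdef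
  -- key : trace (Nᵀ N) = trace (Δᵀ N)
  have hNt : Nᵀ = (1 - Q) * Δᵀ * (1 - P) := by
    rw [hNdef, Matrix.transpose_mul, Matrix.transpose_mul, hPt, hQt, Matrix.mul_assoc]
  have key : (Nᵀ * N).trace = (Δᵀ * N).trace := by
    rw [hNt]
    have e1 : (1 - Q) * Δᵀ * (1 - P) * ((1 - P) * Δ * (1 - Q))
        = (1 - Q) * (Δᵀ * ((1 - P) * Δ * (1 - Q))) := by
      rw [show (1 - Q) * Δᵀ * (1 - P) * ((1 - P) * Δ * (1 - Q))
          = (1 - Q) * Δᵀ * (((1 - P) * (1 - P)) * Δ * (1 - Q)) from by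
            simp only [Matrix.mul_assoc], hP]
      simp only [Matrix.mul_assoc]
    rw [e1, Matrix.trace_mul_comm]
    have e2 : Δᵀ * ((1 - P) * Δ * (1 - Q)) * (1 - Q)
        = Δᵀ * ((1 - P) * Δ * (1 - Q)) := by
      rw [show Δᵀ * ((1 - P) * Δ * (1 - Q)) * (1 - Q)
          = Δᵀ * ((1 - P) * Δ * ((1 - Q) * (1 - Q))) from by
            simp only [Matrix.mul_assoc], hQ]
    rw [e2]
  -- Pythagoras
  have hfrobM : frobNorm (Δ - N) ^ 2 = frobNorm Δ ^ 2 - frobNorm N ^ 2 := by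
    rw [frob_sq, frob_sq, frob_sq]
    have : (Δ - N)ᵀ * (Δ - N) = Δᵀ * Δ - Δᵀ * N - Nᵀ * Δ + Nᵀ * N := by
      rw [Matrix.transpose_sub, Matrix.sub_mul, Matrix.mul_sub, Matrix.mul_sub]
      abel
    rw [this, Matrix.trace_add, Matrix.trace_sub, Matrix.trace_sub, key]
    have : (Nᵀ * Δ).trace = (Δᵀ * N).trace := by
      rw [← Matrix.trace_transpose (Nᵀ * Δ), Matrix.transpose_mul, Matrix.transpose_transpose]
    rw [this]
    ring
  have hN2 : 0 ≤ frobNorm N ^ 2 := sq_nonneg _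
  have h1 : frobNorm (Δ - N) ^ 2 ≤ frobNorm Δ ^ 2 := by rw [hfrobM]; linarith
  calc frobNorm (Δ - N) = Real.sqrt (frobNorm (Δ - N) ^ 2) :=
        (Real.sqrt_sq (frob_nonneg _)).symm
    _ ≤ Real.sqrt (frobNorm Δ ^ 2) := Real.sqrt_le_sqrt h1
    _ = frobNorm Δ := Real.sqrt_sq (frob_nonneg _)

lemma rank_sub_proj_le (Δ : Matrix (Fin d) (Fin T) ℝ) :
    (Δ - projPerp U V Δ).rank ≤ 2 * r := by
  set P : Matrix (Fin d) (Fin d) ℝ := U * Uᵀ with hPdef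
  set Q : Matrix (Fin T) (Fin T) ℝ := V * Vᵀ with hQdef
  have hM : Δ - projPerp U V Δ = P * Δ + ((1 - P) * Δ) * Q := by
    rw [projPerp, ← hPdef, ← hQdef]
    rw [Matrix.sub_mul, Matrix.one_mul, Matrix.mul_sub, Matrix.mul_one, Matrix.sub_mul]
    abel
  rw [hM]
  have h1 : (P * Δ).rank ≤ r := by
    rw [hPdef, Matrix.mul_assoc]
    calc (U * (Uᵀ * Δ)).rank ≤ U.rank := Matrix.rank_mul_le_left U (Uᵀ * Δ)
      _ ≤ r := by simpa using U.rank_le_card_width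
  have h2 : (((1 - P) * Δ) * Q).rank ≤ r := by
    rw [hQdef, ← Matrix.mul_assoc]
    calc ((1 - P) * Δ * V * Vᵀ).rank ≤ Vᵀ.rank :=
        Matrix.rank_mul_le_right ((1 - P) * Δ * V) Vᵀ
      _ ≤ r := by simpa using Vᵀ.rank_le_card_height
  calc (P * Δ + ((1 - P) * Δ) * Q).rank ≤ (P * Δ).rank + (((1 - P) * Δ) * Q).rank :=
      matrix_rank_add_le _ _
    _ ≤ r + r := Nat.add_le_add h1 h2
    _ = 2 * r := (two_mul r).symm

end main

theorem stmt5' {d T r : ℕ}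
    (U : Matrix (Fin d) (Fin r) ℝ) (V : Matrix (Fin T) (Fin r) ℝ)
    (hU : Uᵀ * U = 1) (hV : Vᵀ * V = 1)
    (Δ : Matrix (Fin d) (Fin T) ℝ) (hΔ : Δ ∈ coneC U V) :
    nucNorm Δ ≤ 4 * Real.sqrt (2 * r) * frobNorm Δ := by
  have hcone : nucNorm (projPerp U V Δ) ≤ 3 * nucNorm (Δ - projPerp U V Δ) := hΔ
  set M := Δ - projPerp U V Δ with hMdef
  have hsplit : projPerp U V Δ + M = Δ := by rw [hMdef]; abel
  have h1 : nucNorm Δ ≤ 4 * nucNorm M := by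
    calc nucNorm Δ = nucNorm (projPerp U V Δ + M) := by rw [hsplit]
      _ ≤ nucNorm (projPerp U V Δ) + nucNorm M := nucNorm_add_le _ _
      _ ≤ 3 * nucNorm M + nucNorm M := by linarith
      _ = 4 * nucNorm M := by ring
  have h3 : (M.rank : ℝ) ≤ 2 * (r : ℝ) := by
    have := rank_sub_proj_le U V Δ
    rw [← hMdef] at this
    exact_mod_cast this
  have hsr : Real.sqrt M.rank ≤ Real.sqrt (2 * (r : ℝ)) := Real.sqrt_le_sqrt h3
  have h4 : frobNorm M ≤ frobNorm Δ := frob_sub_proj_le U V hU hV Δ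
  have h2 := nucNorm_le_sqrt_rank_mul_frob M
  calc nucNorm Δ ≤ 4 * nucNorm M := h1
    _ ≤ 4 * (Real.sqrt (2 * (r:ℝ)) * frobNorm Δ) := by
        have h5 : Real.sqrt M.rank * frobNorm M ≤ Real.sqrt (2*(r:ℝ)) * frobNorm Δ :=
          mul_le_mul hsr h4 (frob_nonneg M) (Real.sqrt_nonneg _)
        linarith
    _ = 4 * Real.sqrt (2 * (r:ℝ)) * frobNorm Δ := by ring


/-- every `Δ` in the cone `C(r)` satisfies `‖Δ‖_* ≤ 4 √(2r) ‖Δ‖_F`. -/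
theorem stmt5 {d T r : ℕ} (hd : 0 < d) (hT : 0 < T) (hr : 0 < r)
    (hrd : r ≤ d) (hrT : r ≤ T)
    (W : Matrix (Fin d) (Fin T) ℝ) (hrank : W.rank = r)
    (U : Matrix (Fin d) (Fin r) ℝ) (V : Matrix (Fin T) (Fin r) ℝ) (Dv : Fin r → ℝ)
    (hU : Uᵀ * U = 1) (hV : Vᵀ * V = 1) (hDv : ∀ i, 0 < Dv i)
    (hW : W = U * Matrix.diagonal Dv * Vᵀ)
    (Δ : Matrix (Fin d) (Fin T) ℝ) (hΔ : Δ ∈ coneC U V) :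
    nucNorm Δ ≤ 4 * Real.sqrt (2 * r) * frobNorm Δ :=
  stmt5' U V hU hV Δ hΔ
end

section
/- For every matrix Δ in the cone C(r) and every integer j ≥ 1, the j-th largest singular value of Δ satisfies σ_j(Δ) ≤ 4·√(2r)·‖Δ‖_F / j. -/
open MeasureTheory ProbabilityTheory Matrix

/-- The `j`-th largest singular value of `A` (with `j` 1-indexed); `0` for `j` out of range. -/
noncomputable def svDesc {m n : ℕ} (A : Matrix (Fin m) (Fin n) ℝ) (j : ℕ) : ℝ :=
  if h : 1 ≤ j ∧ j ≤ n then singVals A ((Tuple.sort (singVals A)) ⟨n - j, by omega⟩) else 0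


namespace St6
open Matrix
variable {m n p k : ℕ}

noncomputable def evec (M : Matrix (Fin m) (Fin n) ℝ) (i : Fin n) : Fin n → ℝ :=
  ⇑((Matrix.isHermitian_conjTranspose_mul_self M).eigenvectorBasis i)

noncomputable def eval (M : Matrix (Fin m) (Fin n) ℝ) (i : Fin n) : ℝ :=
  (Matrix.isHermitian_conjTranspose_mul_self M).eigenvalues i

lemma eval_nonneg (M : Matrix (Fin m) (Fin n) ℝ) (i : Fin n) : 0 ≤ eval M i :=
  Matrix.eigenvalues_conjTranspose_mul_self_nonneg M i

lemma sing_eq (M : Matrix (Fin m) (Fin n) ℝ) (i : Fin n) :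
    singVals M i = Real.sqrt (eval M i) := rfl

lemma sing_nonneg (M : Matrix (Fin m) (Fin n) ℝ) (i : Fin n) : 0 ≤ singVals M i :=
  Real.sqrt_nonneg _

lemma sing_sq (M : Matrix (Fin m) (Fin n) ℝ) (i : Fin n) :
    singVals M i ^ 2 = eval M i := Real.sq_sqrt (eval_nonneg M i)

lemma nucNorm_nonneg (M : Matrix (Fin m) (Fin n) ℝ) : 0 ≤ nucNorm M :=
  Finset.sum_nonneg fun i _ => sing_nonneg M i

lemma evec_dot (M : Matrix (Fin m) (Fin n) ℝ) (i j : Fin n) :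
    evec M i ⬝ᵥ evec M j = if i = j then 1 else 0 := by
  have h := ((Matrix.isHermitian_conjTranspose_mul_self M).eigenvectorBasis).orthonormal
  rw [orthonormal_iff_ite] at h
  have := h i j
  simpa [EuclideanSpace.inner_eq_star_dotProduct, evec, dotProduct, mul_comm, eq_comm] using this

lemma evec_complete (M : Matrix (Fin m) (Fin n) ℝ) (k b : Fin n) :
    (∑ i, evec M i k * evec M i b) = if k = b then 1 else 0 := by
  have hM := Matrix.isHermitian_conjTranspose_mul_self M
  have h1 : (hM.eigenvectorUnitary : Matrix (Fin n) (Fin n) ℝ)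
      * star (hM.eigenvectorUnitary : Matrix (Fin n) (Fin n) ℝ) = 1 :=
    Matrix.mem_unitaryGroup_iff.mp hM.eigenvectorUnitary.2
  have h2 := congrFun (congrFun h1 k) b
  simp only [Matrix.mul_apply, Matrix.star_apply, Matrix.one_apply, star_trivial] at h2
  simpa [evec, Matrix.IsHermitian.eigenvectorUnitary_apply] using h2

lemma mulVec_evec (M : Matrix (Fin m) (Fin n) ℝ) (i : Fin n) :
    (Mᴴ * M) *ᵥ evec M i = eval M i • evec M i :=
  (Matrix.isHermitian_conjTranspose_mul_self M).mulVec_eigenvectorBasis i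

lemma dot_MM (M : Matrix (Fin m) (Fin n) ℝ) (x y : Fin n → ℝ) :
    (M *ᵥ x) ⬝ᵥ (M *ᵥ y) = x ⬝ᵥ ((Mᴴ * M) *ᵥ y) := by
  rw [Matrix.conjTranspose_eq_transpose_of_trivial, ← Matrix.mulVec_mulVec,
    Matrix.dotProduct_mulVec x, Matrix.vecMul_transpose, Matrix.dotProduct_mulVec]

lemma dot_Mevec (M : Matrix (Fin m) (Fin n) ℝ) (i j : Fin n) :
    (M *ᵥ evec M i) ⬝ᵥ (M *ᵥ evec M j) = if i = j then eval M i else 0 := by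
  rw [dot_MM, mulVec_evec, dotProduct_smul, smul_eq_mul, evec_dot]
  by_cases h : i = j <;> simp [h]

lemma M_decomp (M : Matrix (Fin m) (Fin n) ℝ) :
    M = ∑ i, vecMulVec (M *ᵥ evec M i) (evec M i) := by
  ext a b
  simp only [Matrix.sum_apply, Matrix.vecMulVec_apply, Matrix.mulVec, dotProduct]
  simp_rw [Finset.sum_mul]
  have swap : ∑ i : Fin n, ∑ x : Fin n, M a x * evec M i x * evec M i b
      = ∑ k : Fin n, ∑ i : Fin n, M a k * evec M i k * evec M i b := Finset.sum_comm
  rw [swap]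
  have : ∀ k, ∑ i, M a k * evec M i k * evec M i b = M a k * (if k = b then 1 else 0) := by
    intro k
    rw [← evec_complete M k b, Finset.mul_sum]
    exact Finset.sum_congr rfl fun i _ => by ring
  simp_rw [this]
  simp

lemma dot_nonneg (w : Fin p → ℝ) : 0 ≤ w ⬝ᵥ w :=
  Finset.sum_nonneg fun i _ => mul_self_nonneg _

lemma sum_dot (f : Fin k → Fin p → ℝ) (y : Fin p → ℝ) :
    (∑ i, f i) ⬝ᵥ y = ∑ i, f i ⬝ᵥ y := by
  simp only [dotProduct, Finset.sum_apply, Finset.sum_mul]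
  exact Finset.sum_comm

lemma dot_sum (y : Fin p → ℝ) (f : Fin k → Fin p → ℝ) :
    y ⬝ᵥ (∑ i, f i) = ∑ i, y ⬝ᵥ f i := by
  simp only [dotProduct, Finset.sum_apply, Finset.mul_sum]
  exact Finset.sum_comm

/-- Frobenius inner product. -/
noncomputable def fip (A B : Matrix (Fin m) (Fin n) ℝ) : ℝ := ∑ i, ∑ j, A i j * B i j

lemma fip_add_left (A B Q : Matrix (Fin m) (Fin n) ℝ) :
    fip (A + B) Q = fip A Q + fip B Q := by
  simp [fip, add_mul, Finset.sum_add_distrib]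

lemma fip_comm (A B : Matrix (Fin m) (Fin n) ℝ) : fip A B = fip B A := by
  simp [fip, mul_comm]

lemma fip_sum_left (A : Fin k → Matrix (Fin m) (Fin n) ℝ) (Q : Matrix (Fin m) (Fin n) ℝ) :
    fip (∑ i, A i) Q = ∑ i, fip (A i) Q := by
  simp only [fip, Matrix.sum_apply, Finset.sum_mul]
  have h1 : ∀ a : Fin m, ∑ b : Fin n, ∑ i : Fin k, A i a b * Q a b
      = ∑ i : Fin k, ∑ b : Fin n, A i a b * Q a b := fun a => Finset.sum_comm
  simp_rw [h1]
  exact Finset.sum_comm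

lemma fip_vecMulVec (u : Fin m → ℝ) (v : Fin n → ℝ) (Q : Matrix (Fin m) (Fin n) ℝ) :
    fip (vecMulVec u v) Q = u ⬝ᵥ (Q *ᵥ v) := by
  simp only [fip, vecMulVec_apply, dotProduct, Matrix.mulVec, Finset.mul_sum]
  refine Finset.sum_congr rfl fun i _ => Finset.sum_congr rfl fun j _ => by ring

/-- Bessel-type inequality. -/
lemma bessel (u : Fin k → Fin p → ℝ)
    (h : ∀ i j, i ≠ j → u i ⬝ᵥ u j = 0) (h2 : ∀ i, u i ⬝ᵥ u i ≤ 1)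
    (x : Fin p → ℝ) : ∑ i, (x ⬝ᵥ u i) ^ 2 ≤ x ⬝ᵥ x := by
  set t : Fin k → ℝ := fun i => x ⬝ᵥ u i with ht
  have key := dot_nonneg (x - ∑ i, t i • u i)
  have expand : (x - ∑ i, t i • u i) ⬝ᵥ (x - ∑ i, t i • u i)
      = x ⬝ᵥ x - 2 * ∑ i, t i ^ 2 + ∑ i, t i ^ 2 * (u i ⬝ᵥ u i) := by
    rw [sub_dotProduct, dotProduct_sub, dotProduct_sub,
      dot_sum, sum_dot, sum_dot]
    simp_rw [smul_dotProduct, smul_eq_mul, dotProduct_smul, smul_eq_mul, dot_sum,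
      dotProduct_smul, smul_eq_mul]
    have e1 : ∑ i, x ⬝ᵥ u i * t i = ∑ i, t i ^ 2 := by
      refine Finset.sum_congr rfl fun i _ => by simp only [ht]; ring
    have e2 : ∑ i, t i * (u i ⬝ᵥ x) = ∑ i, t i ^ 2 := by
      refine Finset.sum_congr rfl fun i _ => by
        rw [dotProduct_comm]; simp only [ht]; ring
    have e3 : ∑ i, t i * ∑ j, t j * (u i ⬝ᵥ u j) = ∑ i, t i ^ 2 * (u i ⬝ᵥ u i) := by
      refine Finset.sum_congr rfl fun i _ => ?_
      rw [Finset.sum_eq_single i]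
      · ring
      · intro j _ hji; rw [h i j (Ne.symm hji)]; ring
      · intro hi; exact absurd (Finset.mem_univ i) hi
    rw [e1, e2, e3]; ring
  rw [expand] at key
  have e4 : ∑ i, t i ^ 2 * (u i ⬝ᵥ u i) ≤ ∑ i, t i ^ 2 :=
    Finset.sum_le_sum fun i _ => by
      nlinarith [sq_nonneg (t i), h2 i]
  have : ∑ i, t i ^ 2 ≤ x ⬝ᵥ x := by linarith
  simpa [ht] using this

/-- A matrix `Q` is a "dual certificate" if its bilinear form is bounded by 1. -/
def DualBound (Q : Matrix (Fin m) (Fin n) ℝ) : Prop :=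
  ∀ x y, x ⬝ᵥ (Q *ᵥ y) ≤ Real.sqrt (x ⬝ᵥ x) * Real.sqrt (y ⬝ᵥ y)

lemma fip_expand (M Q : Matrix (Fin m) (Fin n) ℝ) :
    fip M Q = ∑ i, (M *ᵥ evec M i) ⬝ᵥ (Q *ᵥ evec M i) := by
  conv_lhs => rw [M_decomp M]
  rw [fip_sum_left]
  simp_rw [fip_vecMulVec]

lemma fip_le_nucNorm (M Q : Matrix (Fin m) (Fin n) ℝ) (hQ : DualBound Q) :
    fip M Q ≤ nucNorm M := by
  rw [fip_expand]
  refine Finset.sum_le_sum fun i _ => ?_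
  calc (M *ᵥ evec M i) ⬝ᵥ (Q *ᵥ evec M i)
      ≤ Real.sqrt ((M *ᵥ evec M i) ⬝ᵥ (M *ᵥ evec M i)) * Real.sqrt (evec M i ⬝ᵥ evec M i) :=
        hQ _ _
    _ = singVals M i := by
        rw [dot_Mevec, evec_dot]
        simp [sing_eq]

lemma dot_sumMat_mulVec (A : Fin k → Matrix (Fin m) (Fin n) ℝ) (x : Fin m → ℝ) (y : Fin n → ℝ) :
    x ⬝ᵥ ((∑ i, A i) *ᵥ y) = ∑ i, x ⬝ᵥ (A i *ᵥ y) := by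
  have : (∑ i, A i) *ᵥ y = ∑ i, (A i *ᵥ y) := by
    ext a
    simp only [Matrix.mulVec, dotProduct, Matrix.sum_apply, Finset.sum_apply, Finset.sum_mul]
    exact Finset.sum_comm
  rw [this, dot_sum]

lemma vecMulVec_mulVec' (u : Fin m → ℝ) (v : Fin n → ℝ) (y : Fin n → ℝ) :
    (vecMulVec u v) *ᵥ y = (v ⬝ᵥ y) • u := by
  ext a
  simp [Matrix.mulVec, vecMulVec_apply, dotProduct, Finset.sum_mul, Finset.mul_sum, mul_comm,
    mul_assoc, mul_left_comm]

/-- The dual certificate achieving the nuclear norm. -/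
noncomputable def dualCert (M : Matrix (Fin m) (Fin n) ℝ) : Matrix (Fin m) (Fin n) ℝ :=
  ∑ i, (singVals M i)⁻¹ • vecMulVec (M *ᵥ evec M i) (evec M i)

noncomputable def lvec (M : Matrix (Fin m) (Fin n) ℝ) (i : Fin n) : Fin m → ℝ :=
  (singVals M i)⁻¹ • (M *ᵥ evec M i)

lemma dot_dualCert (M : Matrix (Fin m) (Fin n) ℝ) (x : Fin m → ℝ) (y : Fin n → ℝ) :
    x ⬝ᵥ (dualCert M *ᵥ y)
      = ∑ i, (x ⬝ᵥ lvec M i) * (evec M i ⬝ᵥ y) := by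
  simp only [lvec]
  rw [dualCert, dot_sumMat_mulVec]
  refine Finset.sum_congr rfl fun i _ => ?_
  rw [Matrix.smul_mulVec, vecMulVec_mulVec', dotProduct_smul, dotProduct_smul,
    dotProduct_smul]
  simp [smul_eq_mul]; ring

lemma lvec_dot (M : Matrix (Fin m) (Fin n) ℝ) (i j : Fin n) :
    lvec M i ⬝ᵥ lvec M j = if i = j then (if eval M i = 0 then 0 else 1) else 0 := by
  rw [lvec, lvec, smul_dotProduct, dotProduct_smul, dot_Mevec]
  by_cases h : i = j
  · subst h
    simp only [if_pos rfl, smul_eq_mul]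
    by_cases h0 : eval M i = 0
    · simp [h0]
    · rw [if_neg h0]
      have hs : singVals M i ≠ 0 := by
        rw [sing_eq]
        exact Real.sqrt_ne_zero'.mpr (lt_of_le_of_ne (eval_nonneg M i) (Ne.symm h0))
      field_simp
      rw [← sing_sq M i]; simp
  · simp [h]

lemma dualBound_dualCert (M : Matrix (Fin m) (Fin n) ℝ) : DualBound (dualCert M) := by
  intro x y
  rw [dot_dualCert]
  have cs : (∑ i, (x ⬝ᵥ lvec M i) * (evec M i ⬝ᵥ y)) ^ 2
      ≤ (∑ i, (x ⬝ᵥ lvec M i) ^ 2) * (∑ i, (evec M i ⬝ᵥ y) ^ 2) :=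
    Finset.sum_mul_sq_le_sq_mul_sq _ _ _
  have b1 : ∑ i, (x ⬝ᵥ lvec M i) ^ 2 ≤ x ⬝ᵥ x := by
    refine bessel _ (fun i j hij => ?_) (fun i => ?_) x
    · rw [lvec_dot, if_neg hij]
    · rw [lvec_dot, if_pos rfl]; split <;> norm_num
  have b2 : ∑ i, (evec M i ⬝ᵥ y) ^ 2 ≤ y ⬝ᵥ y := by
    have := bessel (evec M) (fun i j hij => by rw [evec_dot, if_neg hij])
      (fun i => by rw [evec_dot, if_pos rfl]) y
    simpa [dotProduct_comm] using this
  have hx := dot_nonneg x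
  have hy := dot_nonneg y
  calc ∑ i, (x ⬝ᵥ lvec M i) * (evec M i ⬝ᵥ y)
      ≤ Real.sqrt ((∑ i, (x ⬝ᵥ lvec M i) ^ 2) * (∑ i, (evec M i ⬝ᵥ y) ^ 2)) := by
        calc ∑ i, (x ⬝ᵥ lvec M i) * (evec M i ⬝ᵥ y)
            ≤ |∑ i, (x ⬝ᵥ lvec M i) * (evec M i ⬝ᵥ y)| := le_abs_self _
          _ = Real.sqrt ((∑ i, (x ⬝ᵥ lvec M i) * (evec M i ⬝ᵥ y)) ^ 2) :=
              (Real.sqrt_sq_eq_abs _).symm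
          _ ≤ Real.sqrt ((∑ i, (x ⬝ᵥ lvec M i) ^ 2) * (∑ i, (evec M i ⬝ᵥ y) ^ 2)) :=
              Real.sqrt_le_sqrt cs
    _ ≤ Real.sqrt (x ⬝ᵥ x * (y ⬝ᵥ y)) := by
        refine Real.sqrt_le_sqrt ?_
        have h1 : (0:ℝ) ≤ ∑ i, (evec M i ⬝ᵥ y) ^ 2 :=
          Finset.sum_nonneg fun i _ => sq_nonneg _
        have h2 : (0:ℝ) ≤ ∑ i, (x ⬝ᵥ lvec M i) ^ 2 :=
          Finset.sum_nonneg fun i _ => sq_nonneg _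
        nlinarith
    _ = Real.sqrt (x ⬝ᵥ x) * Real.sqrt (y ⬝ᵥ y) := Real.sqrt_mul hx _

lemma fip_dualCert (M : Matrix (Fin m) (Fin n) ℝ) : fip M (dualCert M) = nucNorm M := by
  rw [fip_expand]
  simp_rw [dot_dualCert]
  rw [nucNorm]
  refine Finset.sum_congr rfl fun j _ => ?_
  rw [Finset.sum_eq_single j]
  · rw [lvec, dotProduct_smul, dot_Mevec, if_pos rfl, evec_dot, if_pos rfl, smul_eq_mul]
    by_cases h0 : eval M j = 0
    · simp [h0, sing_eq]
    · have hs : singVals M j ≠ 0 := by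
        rw [sing_eq]
        exact Real.sqrt_ne_zero'.mpr (lt_of_le_of_ne (eval_nonneg M j) (Ne.symm h0))
      rw [← sing_sq M j]
      field_simp
  · intro i _ hij
    rw [lvec, dotProduct_smul, dot_Mevec, if_neg (Ne.symm hij)]
    simp
  · intro hj; exact absurd (Finset.mem_univ j) hj

lemma nucNorm_add_le (A B : Matrix (Fin m) (Fin n) ℝ) :
    nucNorm (A + B) ≤ nucNorm A + nucNorm B := by
  have h1 : nucNorm (A + B) = fip (A + B) (dualCert (A + B)) := (fip_dualCert _).symm
  rw [h1, fip_add_left]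
  exact add_le_add (fip_le_nucNorm _ _ (dualBound_dualCert _))
    (fip_le_nucNorm _ _ (dualBound_dualCert _))


lemma fip_self_sq (M : Matrix (Fin m) (Fin n) ℝ) : fip M M = ∑ i, ∑ j, (M i j) ^ 2 := by
  simp [fip, sq]

lemma frobNorm_eq_sqrt_fip (M : Matrix (Fin m) (Fin n) ℝ) :
    frobNorm M = Real.sqrt (fip M M) := by rw [frobNorm, fip_self_sq]

lemma fip_self_nonneg (M : Matrix (Fin m) (Fin n) ℝ) : 0 ≤ fip M M := by
  rw [fip_self_sq]
  exact Finset.sum_nonneg fun i _ => Finset.sum_nonneg fun j _ => sq_nonneg _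

lemma frobNorm_nonneg (M : Matrix (Fin m) (Fin n) ℝ) : 0 ≤ frobNorm M := Real.sqrt_nonneg _

lemma frobNorm_sq (M : Matrix (Fin m) (Fin n) ℝ) : frobNorm M ^ 2 = fip M M := by
  rw [frobNorm_eq_sqrt_fip, Real.sq_sqrt (fip_self_nonneg M)]

lemma fip_self_eq_sum_eval (M : Matrix (Fin m) (Fin n) ℝ) : fip M M = ∑ i, eval M i := by
  rw [fip_expand]
  simp_rw [dot_Mevec]
  simp

lemma nucNorm_le_sqrt_rank (M : Matrix (Fin m) (Fin n) ℝ) :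
    nucNorm M ≤ Real.sqrt (M.rank) * frobNorm M := by
  classical
  set s : Finset (Fin n) := Finset.univ.filter (fun i => eval M i ≠ 0) with hs
  have hcard : (s.card : ℕ) = M.rank := by
    rw [← Matrix.rank_conjTranspose_mul_self M,
      (Matrix.isHermitian_conjTranspose_mul_self M).rank_eq_card_non_zero_eigs]
    rw [Fintype.card_subtype]
    simp only [hs, eval]
    rfl
  have hnuc : nucNorm M = ∑ i ∈ s, singVals M i := by
    rw [nucNorm]
    refine (Finset.sum_subset (Finset.subset_univ s) fun i _ hi => ?_).symm
    have : eval M i = 0 := by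
      by_contra h
      exact hi (Finset.mem_filter.mpr ⟨Finset.mem_univ i, h⟩)
    rw [sing_eq, this, Real.sqrt_zero]
  have cs : (∑ i ∈ s, singVals M i) ^ 2 ≤ s.card * ∑ i ∈ s, singVals M i ^ 2 :=
    sq_sum_le_card_mul_sum_sq
  have hsum : ∑ i ∈ s, singVals M i ^ 2 ≤ fip M M := by
    rw [fip_self_eq_sum_eval]
    simp_rw [sing_sq]
    exact Finset.sum_le_sum_of_subset_of_nonneg (Finset.subset_univ s)
      fun i _ _ => eval_nonneg M i
  have h1 : nucNorm M ^ 2 ≤ (M.rank : ℝ) * fip M M := by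
    rw [hnuc]
    calc (∑ i ∈ s, singVals M i) ^ 2 ≤ (s.card : ℝ) * ∑ i ∈ s, singVals M i ^ 2 := by
          exact_mod_cast cs
      _ ≤ (M.rank : ℝ) * fip M M := by
          rw [← hcard]
          have h2 : (0:ℝ) ≤ (s.card : ℝ) := Nat.cast_nonneg _
          refine mul_le_mul_of_nonneg_left hsum h2
  calc nucNorm M = Real.sqrt (nucNorm M ^ 2) := (Real.sqrt_sq (nucNorm_nonneg M)).symm
    _ ≤ Real.sqrt ((M.rank : ℝ) * fip M M) := Real.sqrt_le_sqrt h1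
    _ = Real.sqrt (M.rank) * frobNorm M := by
        rw [Real.sqrt_mul (Nat.cast_nonneg _), frobNorm_eq_sqrt_fip]

lemma matrix_rank_add_le (A B : Matrix (Fin m) (Fin n) ℝ) :
    (A + B).rank ≤ A.rank + B.rank := by
  classical
  rw [Matrix.rank, Matrix.rank, Matrix.rank, Matrix.mulVecLin_add]
  have hle : LinearMap.range (A.mulVecLin + B.mulVecLin)
      ≤ LinearMap.range A.mulVecLin ⊔ LinearMap.range B.mulVecLin := by
    rintro _ ⟨x, rfl⟩
    exact Submodule.add_mem_sup ⟨x, rfl⟩ ⟨x, rfl⟩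
  exact le_trans (Submodule.finrank_mono hle)
    (Submodule.finrank_add_le_finrank_add_finrank _ _)

lemma fip_eq_trace (A B : Matrix (Fin m) (Fin n) ℝ) :
    fip A B = Matrix.trace (Aᵀ * B) := by
  simp only [fip, Matrix.trace, Matrix.diag, Matrix.mul_apply, Matrix.transpose_apply]
  exact Finset.sum_comm

lemma top_le_nucNorm (A : Matrix (Fin m) (Fin n) ℝ) (j : ℕ) (h1 : 1 ≤ j) :
    (j : ℝ) * svDesc A j ≤ nucNorm A := by
  by_cases hj : j ≤ n
  · rw [svDesc, dif_pos ⟨h1, hj⟩]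
    set σ := Tuple.sort (singVals A) with hσ
    have hmono : Monotone (singVals A ∘ σ) := Tuple.monotone_sort (singVals A)
    set i0 : Fin n := ⟨n - j, by omega⟩ with hi0
    have hcard : (Finset.Ici i0).card = j := by
      rw [Fin.card_Ici]
      simp [hi0]
      omega
    have hsum : ∑ i, singVals A (σ i) = nucNorm A := by
      rw [nucNorm]
      exact Equiv.sum_comp σ (singVals A)
    have h2 : ∑ i ∈ Finset.Ici i0, singVals A (σ i) ≤ ∑ i, singVals A (σ i) :=
      Finset.sum_le_sum_of_subset_of_nonneg (Finset.subset_univ _)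
        fun i _ _ => sing_nonneg A _
    have h3 : (j : ℝ) * singVals A (σ i0) ≤ ∑ i ∈ Finset.Ici i0, singVals A (σ i) := by
      have h3' := Finset.card_nsmul_le_sum (Finset.Ici i0) (fun i => singVals A (σ i))
        (singVals A (σ i0)) (fun i hi => hmono (Finset.mem_Ici.mp hi))
      rw [hcard, nsmul_eq_mul] at h3'
      exact_mod_cast h3' 
    linarith
  · rw [svDesc, dif_neg (by omega)]
    simp only [mul_zero]
    exact nucNorm_nonneg A


lemma fip_sub_left (A B Q : Matrix (Fin m) (Fin n) ℝ) :
    fip (A - B) Q = fip A Q - fip B Q := by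
  simp [fip, sub_mul, Finset.sum_sub_distrib]

lemma fip_add_right (A B Q : Matrix (Fin m) (Fin n) ℝ) :
    fip Q (A + B) = fip Q A + fip Q B := by
  rw [fip_comm, fip_add_left, fip_comm A Q, fip_comm B Q]

end St6

/-- for `Δ ∈ C(r)` and `j ≥ 1`, the `j`-th largest singular value of `Δ`
satisfies `σ_j(Δ) ≤ 4 √(2r) ‖Δ‖_F / j`. -/
theorem stmt6 {d T r : ℕ} (hd : 0 < d) (hT : 0 < T) (hr : 0 < r)
    (hrd : r ≤ d) (hrT : r ≤ T)
    (W : Matrix (Fin d) (Fin T) ℝ) (hrank : W.rank = r)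
    (U : Matrix (Fin d) (Fin r) ℝ) (V : Matrix (Fin T) (Fin r) ℝ) (Dv : Fin r → ℝ)
    (hU : Uᵀ * U = 1) (hV : Vᵀ * V = 1) (hDv : ∀ i, 0 < Dv i)
    (hW : W = U * Matrix.diagonal Dv * Vᵀ)
    (Δ : Matrix (Fin d) (Fin T) ℝ) (hΔ : Δ ∈ coneC U V)
    (j : ℕ) (hj : 1 ≤ j) :
    svDesc Δ j ≤ 4 * Real.sqrt (2 * r) * frobNorm Δ / j := by
  classical
  have hcone : nucNorm (projPerp U V Δ) ≤ 3 * nucNorm (Δ - projPerp U V Δ) := hΔ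
  have hΔeq : projPerp U V Δ + (Δ - projPerp U V Δ) = Δ := by abel
  have htri : nucNorm Δ ≤ 4 * nucNorm (Δ - projPerp U V Δ) := by
    have h1 : nucNorm Δ ≤ nucNorm (projPerp U V Δ) + nucNorm (Δ - projPerp U V Δ) := by
      conv_lhs => rw [← hΔeq]
      exact St6.nucNorm_add_le _ _
    linarith
  -- idempotency and symmetry facts
  have hUU : Uᵀ * (U * Uᵀ) = Uᵀ := by rw [← Matrix.mul_assoc, hU, Matrix.one_mul]
  have hPP : (U * Uᵀ) * (U * Uᵀ) = U * Uᵀ := by rw [Matrix.mul_assoc, hUU]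
  have hVV : Vᵀ * (V * Vᵀ) = Vᵀ := by rw [← Matrix.mul_assoc, hV, Matrix.one_mul]
  have hKK : (V * Vᵀ) * (V * Vᵀ) = V * Vᵀ := by rw [Matrix.mul_assoc, hVV]
  have hA1i : (1 - U * Uᵀ) * (1 - U * Uᵀ) = 1 - U * Uᵀ := by
    rw [Matrix.mul_sub, Matrix.sub_mul, Matrix.sub_mul, hPP]
    simp only [Matrix.one_mul, Matrix.mul_one]
    abel
  have hA2i : (1 - V * Vᵀ) * (1 - V * Vᵀ) = 1 - V * Vᵀ := by
    rw [Matrix.mul_sub, Matrix.sub_mul, Matrix.sub_mul, hKK]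
    simp only [Matrix.one_mul, Matrix.mul_one]
    abel
  have hA1t : (1 - U * Uᵀ)ᵀ = 1 - U * Uᵀ := by
    rw [Matrix.transpose_sub, Matrix.transpose_one, Matrix.transpose_mul,
      Matrix.transpose_transpose]
  have hA2t : (1 - V * Vᵀ)ᵀ = 1 - V * Vᵀ := by
    rw [Matrix.transpose_sub, Matrix.transpose_one, Matrix.transpose_mul,
      Matrix.transpose_transpose]
  -- rank bound
  have hΓdecomp : Δ - projPerp U V Δ
      = (U * Uᵀ) * Δ + (1 - U * Uᵀ) * (Δ * (V * Vᵀ)) := by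
    rw [projPerp]
    simp only [Matrix.sub_mul, Matrix.mul_sub, Matrix.one_mul, Matrix.mul_one, Matrix.mul_assoc]
    abel
  have hrankΓ : (Δ - projPerp U V Δ).rank ≤ 2 * r := by
    have h1 : ((U * Uᵀ) * Δ).rank ≤ r := by
      rw [Matrix.mul_assoc]
      exact le_trans (Matrix.rank_mul_le_left U (Uᵀ * Δ)) (Matrix.rank_le_width U)
    have h2 : ((1 - U * Uᵀ) * (Δ * (V * Vᵀ))).rank ≤ r := by
      have he : (1 - U * Uᵀ) * (Δ * (V * Vᵀ)) = ((1 - U * Uᵀ) * (Δ * V)) * Vᵀ := by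
        rw [Matrix.mul_assoc, Matrix.mul_assoc]
      rw [he]
      refine le_trans (Matrix.rank_mul_le_right _ Vᵀ) ?_
      rw [Matrix.rank_transpose]
      exact Matrix.rank_le_width V
    calc (Δ - projPerp U V Δ).rank
        ≤ ((U * Uᵀ) * Δ).rank + ((1 - U * Uᵀ) * (Δ * (V * Vᵀ))).rank := by
          rw [hΓdecomp]; exact St6.matrix_rank_add_le _ _
      _ ≤ r + r := add_le_add h1 h2
      _ = 2 * r := by ring
  -- orthogonality: fip (Δ - Π) Π = 0
  have horth : St6.fip (Δ - projPerp U V Δ) (projPerp U V Δ) = 0 := by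
    rw [St6.fip_sub_left]
    have he : St6.fip (projPerp U V Δ) (projPerp U V Δ) = St6.fip Δ (projPerp U V Δ) := by
      rw [St6.fip_eq_trace, St6.fip_eq_trace, projPerp]
      have ht : ((1 - U * Uᵀ) * Δ * (1 - V * Vᵀ))ᵀ
          = (1 - V * Vᵀ) * (Δᵀ * (1 - U * Uᵀ)) := by
        rw [Matrix.transpose_mul, Matrix.transpose_mul, hA1t, hA2t]
      rw [ht]
      rw [Matrix.trace_mul_comm]
      -- trace ((1-P)Δ(1-K) * ((1-K) Δᵀ (1-P)))  vs trace (Δᵀ * ((1-P)Δ(1-K)))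
      have e1 : (1 - U * Uᵀ) * Δ * (1 - V * Vᵀ) * ((1 - V * Vᵀ) * (Δᵀ * (1 - U * Uᵀ)))
          = (1 - U * Uᵀ) * Δ * (1 - V * Vᵀ) * (Δᵀ * (1 - U * Uᵀ)) := by
        rw [Matrix.mul_assoc ((1 - U * Uᵀ) * Δ) (1 - V * Vᵀ), ← Matrix.mul_assoc (1 - V * Vᵀ),
          hA2i, ← Matrix.mul_assoc]
      rw [e1]
      -- now trace((1-P) Δ (1-K) Δᵀ (1-P)) = trace(Δᵀ (1-P) Δ (1-K))
      rw [Matrix.trace_mul_comm]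
      have e2 : (1 - U * Uᵀ) * ((1 - U * Uᵀ) * Δ * (1 - V * Vᵀ))
          = (1 - U * Uᵀ) * Δ * (1 - V * Vᵀ) := by
        rw [← Matrix.mul_assoc, ← Matrix.mul_assoc, hA1i]
      rw [Matrix.mul_assoc, e2]
    rw [he]
    ring
  -- frobenius monotonicity
  have hfrob : frobNorm (Δ - projPerp U V Δ) ≤ frobNorm Δ := by
    have hsplit : St6.fip Δ Δ
        = St6.fip (Δ - projPerp U V Δ) (Δ - projPerp U V Δ)
          + St6.fip (projPerp U V Δ) (projPerp U V Δ) := by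
      conv_lhs => rw [← hΔeq]
      rw [St6.fip_add_left, St6.fip_add_right, St6.fip_add_right]
      have hc : St6.fip (projPerp U V Δ) (Δ - projPerp U V Δ) = 0 := by
        rw [St6.fip_comm]; exact horth
      rw [St6.fip_comm (projPerp U V Δ) (Δ - projPerp U V Δ)] at hc
      have hc2 : St6.fip (Δ - projPerp U V Δ) (projPerp U V Δ) = 0 := horth
      rw [St6.fip_comm (Δ - projPerp U V Δ) (projPerp U V Δ)] at hc2
      linarith [hc, hc2, horth]
    rw [St6.frobNorm_eq_sqrt_fip, St6.frobNorm_eq_sqrt_fip]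
    refine Real.sqrt_le_sqrt ?_
    have := St6.fip_self_nonneg (projPerp U V Δ)
    linarith
  -- assembly
  have hnucΓ : nucNorm (Δ - projPerp U V Δ)
      ≤ Real.sqrt (2 * r) * frobNorm Δ := by
    calc nucNorm (Δ - projPerp U V Δ)
        ≤ Real.sqrt ((Δ - projPerp U V Δ).rank) * frobNorm (Δ - projPerp U V Δ) :=
          St6.nucNorm_le_sqrt_rank _
      _ ≤ Real.sqrt (2 * r) * frobNorm Δ := by
          refine mul_le_mul ?_ hfrob (St6.frobNorm_nonneg _) (Real.sqrt_nonneg _)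
          refine Real.sqrt_le_sqrt ?_
          exact_mod_cast hrankΓ
  have key : (j : ℝ) * svDesc Δ j ≤ 4 * Real.sqrt (2 * r) * frobNorm Δ := by
    calc (j : ℝ) * svDesc Δ j ≤ nucNorm Δ := St6.top_le_nucNorm Δ j hj
      _ ≤ 4 * nucNorm (Δ - projPerp U V Δ) := htri
      _ ≤ 4 * (Real.sqrt (2 * r) * frobNorm Δ) := by linarith
      _ = 4 * Real.sqrt (2 * r) * frobNorm Δ := by ring
  have hj0 : (0 : ℝ) < j := by exact_mod_cast hj
  rw [le_div_iff₀ hj0]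
  linarith [key]
end
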